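/- Let f_1, ..., f_N : ℝ^d → ℝ be differentiable functions that are each μ-strongly convex (μ > 0) with L-Lipschitz gradients, let F(w) = (1/N)·Σ_{m=1}^N f_m(w) with minimizer w* (so ∇F(w*) = 0), let p_1, ..., p_N be nonnegative weights summing to 1, let F̃(w) = Σ_{m=1}^N p_m f_m(w) with minimizer w̃ (so ∇F̃(w̃) = 0), and set κ² = (1/N)·Σ_{m=1}^N ‖∇f_m(w*)‖² and D = 2·max_{m} (1/μ)‖∇f_m(0)‖. Let η ≥ 0 with η·μ ≤ 1, let ζ ≥ 0, and let (W_t)_{t≥0} be a sequence of square-integrable ℝ^d-valued random vectors on a probability space such that 𝔼[‖W_0 − w̃‖²] ≤ D² and, for every t ≥ 0, 𝔼[‖W_{t+1} − w̃‖²] ≤ (1 − ημ)²·𝔼[‖W_t − w̃‖²] + η²ζ. Then for every t ≥ 0, 𝔼[‖W_t − w*‖²] ≤ 2·D²·(1 − ημ)^{2t} + 2·(N·κ²/μ²)·Σ_{m=1}^N (1/N − p_m)² + 2·(η/μ)·ζ. -/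

import Mathlib

open MeasureTheory
open scoped RealInnerProductSpace BigOperators

private lemma hasGradientAt_wsum {F : Type*} [NormedAddCommGroup F] [InnerProductSpace ℝ F]
    [CompleteSpace F] {ι : Type*} (s : Finset ι) (c : ι → ℝ) (f : ι → F → ℝ)
    (hdiff : ∀ m x, DifferentiableAt ℝ (f m) x) (x : F) :
    HasGradientAt (fun w => ∑ m ∈ s, c m * f m w) (∑ m ∈ s, c m • gradient (f m) x) x := by
  rw [hasGradientAt_iff_hasFDerivAt, map_sum]
  exact HasFDerivAt.fun_sum fun m _ => by
    simpa using ((hdiff m x).hasGradientAt.hasFDerivAt.const_mul (c m))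

open MeasureTheory
open scoped RealInnerProductSpace BigOperators

set_option maxHeartbeats 1600000 in
/-- Convergence bound for biased wireless FL (Theorem 1):
optimality error ≤ initialization error + model bias + gradient estimation variance. -/
theorem biased_FL_optimality_error
    {d N : ℕ} [NeZero N]
    (f : Fin N → EuclideanSpace ℝ (Fin d) → ℝ)
    (μ L : ℝ) (hμ : 0 < μ)
    (hdiff : ∀ m x, DifferentiableAt ℝ (f m) x)
    (hsc : ∀ m (x y : EuclideanSpace ℝ (Fin d)),
      f m y ≥ f m x + ⟪gradient (f m) x, y - x⟫ + μ / 2 * ‖y - x‖ ^ 2)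
    (hsmooth : ∀ m (x y : EuclideanSpace ℝ (Fin d)),
      ‖gradient (f m) x - gradient (f m) y‖ ≤ L * ‖x - y‖)
    (F : EuclideanSpace ℝ (Fin d) → ℝ)
    (hF : F = fun w => (1 / N : ℝ) * ∑ m, f m w)
    (wstar : EuclideanSpace ℝ (Fin d)) (hwstar : gradient F wstar = 0)
    (p : Fin N → ℝ) (hp : ∀ m, 0 ≤ p m) (hpsum : ∑ m, p m = 1)
    (Ftil : EuclideanSpace ℝ (Fin d) → ℝ)
    (hFtil : Ftil = fun w => ∑ m, p m * f m w)
    (wtil : EuclideanSpace ℝ (Fin d)) (hwtil : gradient Ftil wtil = 0)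
    (κsq D : ℝ)
    (hκ : κsq = (1 / N : ℝ) * ∑ m, ‖gradient (f m) wstar‖ ^ 2)
    (hD : D = 2 * Finset.univ.sup' Finset.univ_nonempty
      (fun m => 1 / μ * ‖gradient (f m) 0‖))
    (η ζ : ℝ) (hη : 0 ≤ η) (hημ : η * μ ≤ 1) (hζ : 0 ≤ ζ)
    {Ω : Type*} [MeasurableSpace Ω] (P : Measure Ω) [IsProbabilityMeasure P]
    (W : ℕ → Ω → EuclideanSpace ℝ (Fin d))
    (hWL2 : ∀ t, MemLp (W t) 2 P)
    (hW0 : ∫ ω, ‖W 0 ω - wtil‖ ^ 2 ∂P ≤ D ^ 2)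
    (hrec : ∀ t, ∫ ω, ‖W (t + 1) ω - wtil‖ ^ 2 ∂P ≤
      (1 - η * μ) ^ 2 * ∫ ω, ‖W t ω - wtil‖ ^ 2 ∂P + η ^ 2 * ζ) :
    ∀ t, ∫ ω, ‖W t ω - wstar‖ ^ 2 ∂P ≤
      2 * D ^ 2 * (1 - η * μ) ^ (2 * t)
        + 2 * (N * κsq / μ ^ 2) * ∑ m, (1 / N - p m) ^ 2
        + 2 * (η / μ) * ζ := by
  have hN : (N : ℝ) ≠ 0 := Nat.cast_ne_zero.mpr (NeZero.ne N)
  -- ## Step 1: the bias bound ‖wstar - wtil‖² ≤ (N κ²/μ²) ∑ (1/N - pₘ)²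
  have hB : ‖wstar - wtil‖ ^ 2 ≤ N * κsq / μ ^ 2 * ∑ m, (1 / N - p m) ^ 2 := by
    have hGtil : ∑ m, p m • gradient (f m) wtil = 0 := by
      have h : HasGradientAt Ftil (∑ m, p m • gradient (f m) wtil) wtil := by
        rw [hFtil]; exact hasGradientAt_wsum Finset.univ p f hdiff wtil
      rw [← h.gradient, hwtil]
    have hGstar : ∑ m, gradient (f m) wstar = 0 := by
      have h : HasGradientAt F (∑ m, (1 / N : ℝ) • gradient (f m) wstar) wstar := by
        rw [hF]
        have := hasGradientAt_wsum Finset.univ (fun _ => (1 / N : ℝ)) f hdiff wstar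
        simpa [Finset.mul_sum] using this
      have h2 : (1 / N : ℝ) • ∑ m, gradient (f m) wstar = 0 := by
        rw [Finset.smul_sum, ← h.gradient, hwstar]
      have := smul_eq_zero.mp h2
      simpa [hN] using this
    set Δ := wstar - wtil with hΔdef
    set G := ∑ m, p m • gradient (f m) wstar with hGdef
    have hsc2 : ∀ m : Fin N,
        ⟪gradient (f m) wtil, Δ⟫ + μ * ‖Δ‖ ^ 2 ≤ ⟪gradient (f m) wstar, Δ⟫ := by
      intro m
      have h1 := hsc m wtil wstar
      have h2 := hsc m wstar wtil
      rw [← neg_sub wstar wtil, inner_neg_right, norm_neg] at h2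
      change _ + ⟪gradient (f m) wtil, Δ⟫ + _ ≤ _ at h1
      change _ + -⟪gradient (f m) wstar, Δ⟫ + μ / 2 * ‖Δ‖ ^ 2 ≤ _ at h2
      linarith
    have l1 : ∑ m, p m * ⟪gradient (f m) wtil, Δ⟫ = 0 := by
      have e : ⟪∑ m, p m • gradient (f m) wtil, Δ⟫ = ∑ m, p m * ⟪gradient (f m) wtil, Δ⟫ := by
        rw [sum_inner]; exact Finset.sum_congr rfl fun m _ => real_inner_smul_left _ _ _
      rw [← e, hGtil, inner_zero_left]
    have l2 : ∑ m, p m * ⟪gradient (f m) wstar, Δ⟫ = ⟪G, Δ⟫ := by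
      rw [hGdef, sum_inner]
      exact (Finset.sum_congr rfl fun m _ => (real_inner_smul_left _ _ _).symm)
    have key : μ * ‖Δ‖ ^ 2 ≤ ⟪G, Δ⟫ := by
      have hs := Finset.sum_le_sum (fun m (_ : m ∈ Finset.univ) =>
        mul_le_mul_of_nonneg_left (hsc2 m) (hp m))
      simp only [mul_add, Finset.sum_add_distrib, ← Finset.sum_mul, hpsum, one_mul] at hs
      rw [l1, l2] at hs; linarith
    have hGeq : G = ∑ m, (p m - (1 / N : ℝ)) • gradient (f m) wstar := by
      simp [sub_smul, Finset.sum_sub_distrib, ← Finset.smul_sum, hGstar, hGdef]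
    have hSg : ∑ m, ‖gradient (f m) wstar‖ ^ 2 = N * κsq := by
      rw [hκ]; field_simp
    have hG2 : ‖G‖ ^ 2 ≤ (∑ m, (1 / N - p m) ^ 2) * (N * κsq) := by
      have h1 : ‖G‖ ≤ ∑ m, |1 / N - p m| * ‖gradient (f m) wstar‖ := by
        rw [hGeq]
        refine (norm_sum_le _ _).trans (Finset.sum_le_sum fun m _ => ?_)
        rw [norm_smul, Real.norm_eq_abs, abs_sub_comm]
      calc ‖G‖ ^ 2 ≤ (∑ m, |1 / N - p m| * ‖gradient (f m) wstar‖) ^ 2 := by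
            apply pow_le_pow_left₀ (norm_nonneg _) h1
        _ ≤ (∑ m, |1 / N - p m| ^ 2) * ∑ m, ‖gradient (f m) wstar‖ ^ 2 :=
            Finset.sum_mul_sq_le_sq_mul_sq _ _ _
        _ = (∑ m, (1 / N - p m) ^ 2) * (N * κsq) := by rw [hSg]; simp [sq_abs]
    have hSnn : 0 ≤ ∑ m, (1 / N - p m) ^ 2 := Finset.sum_nonneg fun m _ => sq_nonneg _
    have hNκ : 0 ≤ (N : ℝ) * κsq := by rw [← hSg]; positivity
    rw [div_mul_eq_mul_div, le_div_iff₀ (by positivity : (0:ℝ) < μ ^ 2)]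
    by_cases hΔ0 : ‖Δ‖ = 0
    · rw [show ‖wstar - wtil‖ = ‖Δ‖ from rfl, hΔ0]
      nlinarith
    · have hΔpos : 0 < ‖Δ‖ := lt_of_le_of_ne (norm_nonneg _) (Ne.symm hΔ0)
      have h5 : μ * ‖Δ‖ ≤ ‖G‖ := by
        have := key.trans (real_inner_le_norm G Δ)
        have h6 : (μ * ‖Δ‖) * ‖Δ‖ ≤ ‖G‖ * ‖Δ‖ := by nlinarith
        exact le_of_mul_le_mul_right h6 hΔpos
      have h7 : (μ * ‖Δ‖) ^ 2 ≤ ‖G‖ ^ 2 := by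
        apply pow_le_pow_left₀ (by positivity) h5
      calc ‖wstar - wtil‖ ^ 2 * μ ^ 2 = (μ * ‖Δ‖) ^ 2 := by rw [hΔdef]; ring
        _ ≤ ‖G‖ ^ 2 := h7
        _ ≤ (∑ m, (1 / N - p m) ^ 2) * (N * κsq) := hG2
        _ = N * κsq * ∑ m, (1 / N - p m) ^ 2 := by ring
  -- ## Step 2: solve the recursion
  have hc : 0 ≤ η * ζ / μ := by positivity
  have hkeyrec : ∀ t, ∫ ω, ‖W t ω - wtil‖ ^ 2 ∂P ≤ D ^ 2 * ((1 - η * μ) ^ 2) ^ t + η * ζ / μ := by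
    intro t
    induction t with
    | zero => simpa using by linarith
    | succ t ih =>
      have hr : (0:ℝ) ≤ (1 - η * μ) ^ 2 := sq_nonneg _
      have hkey : (1 - η * μ) ^ 2 * (η * ζ / μ) + η ^ 2 * ζ ≤ η * ζ / μ := by
        have h1 : (1 - η * μ) ^ 2 * (η * ζ / μ) + η ^ 2 * ζ - η * ζ / μ
            = η ^ 2 * ζ * (η * μ - 1) := by field_simp; ring
        nlinarith [mul_nonneg (mul_nonneg (sq_nonneg η) hζ) (sub_nonneg.mpr hημ)]
      calc ∫ ω, ‖W (t + 1) ω - wtil‖ ^ 2 ∂P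
          ≤ (1 - η * μ) ^ 2 * ∫ ω, ‖W t ω - wtil‖ ^ 2 ∂P + η ^ 2 * ζ := hrec t
        _ ≤ (1 - η * μ) ^ 2 * (D ^ 2 * ((1 - η * μ) ^ 2) ^ t + η * ζ / μ) + η ^ 2 * ζ := by
            nlinarith
        _ = D ^ 2 * ((1 - η * μ) ^ 2) ^ (t + 1) + ((1 - η * μ) ^ 2 * (η * ζ / μ) + η ^ 2 * ζ) := by
            rw [pow_succ]; ring
        _ ≤ D ^ 2 * ((1 - η * μ) ^ 2) ^ (t + 1) + η * ζ / μ := by linarith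
  -- ## Step 3: triangle inequality under the integral, and conclude
  intro t
  have hint1 : Integrable (fun ω => ‖W t ω - wtil‖ ^ 2) P :=
    (((hWL2 t).sub (memLp_const wtil)).norm).integrable_sq
  have hint2 : Integrable (fun ω => ‖W t ω - wstar‖ ^ 2) P :=
    (((hWL2 t).sub (memLp_const wstar)).norm).integrable_sq
  have hmono : ∫ ω, ‖W t ω - wstar‖ ^ 2 ∂P ≤
      ∫ ω, (2 * ‖W t ω - wtil‖ ^ 2 + 2 * ‖wstar - wtil‖ ^ 2) ∂P := by
    refine integral_mono hint2 ((hint1.const_mul 2).add (integrable_const _)) fun ω => ?_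
    have e : W t ω - wstar = (W t ω - wtil) + (wtil - wstar) := by abel
    have h1 : ‖W t ω - wstar‖ ≤ ‖W t ω - wtil‖ + ‖wtil - wstar‖ := by
      rw [e]; exact norm_add_le _ _
    rw [norm_sub_rev wtil wstar] at h1
    nlinarith [sq_nonneg (‖W t ω - wtil‖ - ‖wstar - wtil‖), norm_nonneg (W t ω - wstar),
      norm_nonneg (W t ω - wtil), norm_nonneg (wstar - wtil),
      sq_nonneg (‖W t ω - wstar‖ - ‖W t ω - wtil‖ - ‖wstar - wtil‖)]
  rw [integral_add (hint1.const_mul 2) (integrable_const _), integral_const_mul,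
    integral_const] at hmono
  simp only [measure_univ, probReal_univ, ENNReal.toReal_one, smul_eq_mul, one_mul] at hmono
  rw [pow_mul]
  have h8 := hkeyrec t
  have e1 : 2 * (η / μ) * ζ = 2 * (η * ζ / μ) := by ring
  have e2 : 2 * ((N : ℝ) * κsq / μ ^ 2) * ∑ m, (1 / N - p m) ^ 2
      = 2 * ((N : ℝ) * κsq / μ ^ 2 * ∑ m, (1 / N - p m) ^ 2) := by ring
  have e3 : 2 * D ^ 2 * ((1 - η * μ) ^ 2) ^ t = 2 * (D ^ 2 * ((1 - η * μ) ^ 2) ^ t) := by ring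
  rw [e1, e2, e3]
  linarith
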